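/- Let G be any finite simple graph on vertex set {1,…,n} with adjacency matrix A, let σ ∈ {−1,+1}^n, and let ℓ ≥ 0. (a) If the subgraph of G induced on the ball {j : d_G(i,j) ≤ ℓ} around a vertex i is a tree, then for every m ≤ ℓ, (B^{(m)}e)_i = S_m(i) and (B^{(m)}σ)_i = D_m(i). (b) If the subgraph induced on that ball contains at most one cycle, then for every m ≤ ℓ, |(B^{(m)}σ)_i| ≤ (B^{(m)}e)_i ≤ 2·Σ_{t=0}^{m} S_t(i). -/

import Mathlib

open MeasureTheory ProbabilityTheory Finset Filter Matrix

noncomputable section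

/-- A configuration of the stochastic block model: a vector of spins (in `ℤ`) and a
family of edge indicators. -/
abbrev Config (n : ℕ) := (Fin n → ℤ) × (Fin n → Fin n → Bool)

instance (n : ℕ) : MeasurableSpace (Config n) := ⊤

/-- The probability of an edge between `i` and `j`, given the spins. -/
def edgeP (a b : ℝ) (n : ℕ) (σ : Fin n → ℤ) (i j : Fin n) : ℝ :=
  if σ i = σ j then a / n else b / n

/-- The probability weight of a configuration: spins are i.i.d. uniform on `{-1,1}`,
and conditionally on the spins, edges `{i,j}`, `i < j`, are present independently with
probability `a/n` (equal spins) or `b/n` (unequal spins); the indicator family is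
required to be symmetric with empty diagonal. -/
def sbmWeight (a b : ℝ) (n : ℕ) (ω : Config n) : ℝ :=
  if (∀ i, ω.1 i = 1 ∨ ω.1 i = -1) ∧ (∀ i j, ω.2 i j = ω.2 j i) ∧ (∀ i, ω.2 i i = false) then
    (1 / 2) ^ n *
      ∏ i, ∏ j,
        (if i < j then
          (if ω.2 i j then edgeP a b n ω.1 i j else 1 - edgeP a b n ω.1 i j) else 1)
  else 0

/-- The law of the stochastic block model with parameters `a`, `b` on `n` nodes. -/
def sbm (a b : ℝ) (n : ℕ) : Measure (Config n) :=
  Measure.count.withDensity fun ω => ENNReal.ofReal (sbmWeight a b n ω)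

/-- The (symmetric) adjacency matrix of a configuration. -/
def adjM (n : ℕ) (ω : Config n) : Matrix (Fin n) (Fin n) ℝ :=
  Matrix.of fun i j => if ω.2 i j ∧ ω.2 j i then 1 else 0

/-- The spin vector of a configuration, as a real vector. -/
def spinVec (n : ℕ) (ω : Config n) : Fin n → ℝ := fun i => (ω.1 i : ℝ)

/-- The random graph of a configuration. -/
def graphOf (n : ℕ) (ω : Config n) : SimpleGraph (Fin n) where
  Adj i j := i ≠ j ∧ ω.2 i j ∧ ω.2 j i
  symm := ⟨fun i j h => ⟨h.1.symm, h.2.2, h.2.1⟩⟩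
  loopless := ⟨fun i h => h.1 rfl⟩

/-- `Bmat n ℓ A i j` counts (with matrix weights) the self-avoiding paths of length `ℓ`
from `i` to `j`: it is the sum over sequences `i = p 0, p 1, …, p ℓ = j` of `ℓ+1`
distinct nodes of the product of the entries of `A` along the path. -/
def Bmat (n ℓ : ℕ) (A : Matrix (Fin n) (Fin n) ℝ) : Matrix (Fin n) (Fin n) ℝ :=
  Matrix.of fun i j =>
    ∑ p : Fin (ℓ + 1) → Fin n,
      if p 0 = i ∧ p (Fin.last ℓ) = j ∧ Function.Injective p then
        ∏ t : Fin ℓ, A (p t.castSucc) (p t.succ)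
      else 0

/-- Euclidean norm of a vector. -/
def vnorm {n : ℕ} (x : Fin n → ℝ) : ℝ := Real.sqrt (∑ i, x i ^ 2)

/-- `ℓ = ⌊c log n⌋`. -/
def pathLen (c : ℝ) (n : ℕ) : ℕ := ⌊c * Real.log n⌋₊

/-- number of nodes at graph distance exactly `t` from `i`. -/
def Sg {n : ℕ} (G : SimpleGraph (Fin n)) (i : Fin n) (t : ℕ) : ℝ :=
  ∑ j, if G.edist i j = (t : ℕ∞) then 1 else 0

/-- sum of the spins of the nodes at graph distance exactly `t` from `i`. -/
def Dg {n : ℕ} (G : SimpleGraph (Fin n)) (σ : Fin n → ℤ) (i : Fin n) (t : ℕ) : ℝ :=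
  ∑ j, if G.edist i j = (t : ℕ∞) then (σ j : ℝ) else 0

set_option linter.unusedSectionVars false
set_option linter.unusedVariables false
set_option linter.unreachableTactic false
set_option linter.unusedTactic false
set_option maxHeartbeats 1000000
namespace SBMAux

open SimpleGraph

variable {V : Type*} {Γ : SimpleGraph V}

/-- Build a walk from a vertex function with consecutive adjacencies. -/
def walkOfFn (Γ : SimpleGraph V) : (m : ℕ) → (q : ℕ → V) →
    (h : ∀ t < m, Γ.Adj (q t) (q (t + 1))) → Γ.Walk (q 0) (q m)
  | 0, _, _ => SimpleGraph.Walk.nil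
  | m + 1, q, h =>
    SimpleGraph.Walk.cons (h 0 (Nat.succ_pos m))
      (walkOfFn Γ m (fun t => q (t + 1)) (fun t ht => h (t + 1) (by omega)))

@[simp] lemma length_walkOfFn : ∀ (m : ℕ) (q : ℕ → V) (h),
    (walkOfFn Γ m q h).length = m
  | 0, _, _ => rfl
  | m + 1, q, h => by
    simp [walkOfFn, length_walkOfFn m]

lemma getVert_walkOfFn : ∀ (m : ℕ) (q : ℕ → V) (h) (t : ℕ), t ≤ m →
    (walkOfFn Γ m q h).getVert t = q t
  | 0, q, h, t, ht => by
    interval_cases t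
    simp [walkOfFn]
  | m + 1, q, h, 0, ht => by simp [walkOfFn]
  | m + 1, q, h, t + 1, ht => by
    simpa [walkOfFn, SimpleGraph.Walk.getVert_cons_succ] using
      getVert_walkOfFn m (fun t => q (t + 1)) _ t (by omega)

lemma isPath_walkOfFn : ∀ (m : ℕ) (q : ℕ → V) (h),
    (∀ s t, s ≤ m → t ≤ m → q s = q t → s = t) →
    (walkOfFn Γ m q h).IsPath
  | 0, q, h, _ => by simp [walkOfFn]
  | m + 1, q, h, hinj => by
    refine SimpleGraph.Walk.IsPath.cons
      (isPath_walkOfFn m _ _ fun s t hs ht hq => by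
        have := hinj (s+1) (t+1) (by omega) (by omega) hq; omega) ?_
    intro hmem
    rw [SimpleGraph.Walk.mem_support_iff_exists_getVert] at hmem
    obtain ⟨t, hq, ht⟩ := hmem
    rw [length_walkOfFn] at ht
    rw [getVert_walkOfFn m _ _ t ht] at hq
    exact Nat.succ_ne_zero t (hinj (t+1) 0 (by omega) (by omega) hq)

/-- getVert is injective (on indices up to the length) for a path. -/
lemma getVert_injOn {x y : V} : ∀ (w : Γ.Walk x y), w.IsPath →
    ∀ s t, s ≤ w.length → t ≤ w.length → w.getVert s = w.getVert t → s = t := by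
  intro w
  induction w with
  | nil => intro _ s t hs ht _; simp at hs ht; omega
  | cons h rest ih =>
    intro hp s t hs ht heq
    rcases SimpleGraph.Walk.cons_isPath_iff _ _ |>.mp hp with ⟨hrest, hx⟩
    match s, t with
    | 0, 0 => rfl
    | 0, t + 1 =>
      exfalso
      apply hx
      rw [SimpleGraph.Walk.mem_support_iff_exists_getVert]
      refine ⟨t, ?_, by simp at ht ⊢; omega⟩
      rw [SimpleGraph.Walk.getVert_cons_succ] at heq
      simp at heq
      exact heq.symm
    | s + 1, 0 =>
      exfalso
      apply hx
      rw [SimpleGraph.Walk.mem_support_iff_exists_getVert]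
      refine ⟨s, ?_, by simp at hs ⊢; omega⟩
      rw [SimpleGraph.Walk.getVert_cons_succ] at heq
      simp at heq
      exact heq
    | s + 1, t + 1 =>
      rw [SimpleGraph.Walk.getVert_cons_succ, SimpleGraph.Walk.getVert_cons_succ] at heq
      have := ih hrest s t (by simp at hs; omega) (by simp at ht; omega) heq
      omega



section C
section B
variable [Fintype V]


lemma ncard_sub_one {e : Sym2 V} {s : Set (Sym2 V)} (he : e ∈ s) :
    (s \ {e}).ncard + 1 = s.ncard := by
  have h1 := Set.encard_diff_singleton_add_one he
  have h2 : s.encard ≠ ⊤ := Set.encard_ne_top_iff.mpr (Set.toFinite s)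
  rw [Set.ncard_def, Set.ncard_def, ← h1]
  have h3 : (s \ {e}).encard ≠ ⊤ := Set.encard_ne_top_iff.mpr (Set.toFinite _)
  rw [ENat.toNat_add h3 (by simp)]
  simp

lemma reachable_del {H : SimpleGraph V} {e : Sym2 V}
    (hrea : ∀ a b : V, e = s(a, b) → (H.deleteEdges {e}).Reachable a b) :
    ∀ {x y : V}, H.Walk x y → (H.deleteEdges {e}).Reachable x y := by
  intro x y w
  induction w with
  | nil => exact Reachable.refl _
  | @cons x z y h rest ih =>
    refine Reachable.trans ?_ ih
    by_cases hc : e = s(x, z)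
    · exact hrea x z hc
    · exact SimpleGraph.Adj.reachable (by
        rw [SimpleGraph.deleteEdges_adj]
        exact ⟨h, by simpa [eq_comm] using hc⟩)

lemma connected_deleteEdges_of_cycle {H : SimpleGraph V} (hconn : H.Connected)
    {u₀ : V} {c : H.Walk u₀ u₀} (hc : c.IsCycle) {e : Sym2 V} (he : e ∈ c.edges) :
    (H.deleteEdges {e}).Connected := by
  have hrea : ∀ a b : V, e = s(a, b) → (H.deleteEdges {e}).Reachable a b := by
    intro a b hab
    subst hab
    exact ((SimpleGraph.adj_and_reachable_delete_edges_iff_exists_cycle).mpr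
      ⟨u₀, c, hc, he⟩).2
  have : Nonempty V := hconn.nonempty
  exact ⟨fun x y => reachable_del hrea ((hconn.preconnected x y).some)⟩

lemma isTree_ncard {T : SimpleGraph V} (h : T.IsTree) :
    T.edgeSet.ncard + 1 = Fintype.card V := by
  classical
  have := h.card_edgeFinset
  rwa [Set.ncard_eq_toFinset_card'] at *

lemma acyclic_of_sparse : ∀ (N : ℕ) (H : SimpleGraph V), H.Connected →
    H.edgeSet.ncard = N → N + 1 ≤ Fintype.card V → H.IsAcyclic := by
  intro N
  induction N with
  | zero =>
    intro H hconn hcard _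
    intro v c hc
    have h3 := hc.three_le_length
    have hne : c.edges ≠ [] := by
      intro h
      have := c.length_edges
      rw [h] at this
      simp at this
      omega
    have heE : c.edges.head hne ∈ H.edgeSet :=
      c.edges_subset_edgeSet (List.head_mem hne)
    have : H.edgeSet = ∅ := (Set.ncard_eq_zero (Set.toFinite _)).mp hcard
    rw [this] at heE
    exact heE
  | succ N ih =>
    intro H hconn hcard hle
    by_contra hnac
    rw [SimpleGraph.isAcyclic_iff_path_unique] at hnac
    push_neg at hnac
    obtain ⟨v, w, p, q, hpq⟩ := hnac
    have hnac' : ¬ H.IsAcyclic := fun h => hpq (h.path_unique p q)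
    simp only [SimpleGraph.IsAcyclic] at hnac'
    push_neg at hnac'
    obtain ⟨v₀, c, hc⟩ := hnac'
    have h3 := hc.three_le_length
    have hne : c.edges ≠ [] := by
      intro h
      have := c.length_edges
      rw [h] at this
      simp at this
      omega
    set e := c.edges.head hne with hedef
    have he : e ∈ c.edges := List.head_mem hne
    have heE : e ∈ H.edgeSet := c.edges_subset_edgeSet he
    have hT := connected_deleteEdges_of_cycle hconn hc he
    have hcard' : (H.deleteEdges {e}).edgeSet.ncard + 1 = N + 1 := by
      rw [SimpleGraph.edgeSet_deleteEdges, ncard_sub_one heE, hcard]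
    have hac := ih (H.deleteEdges {e}) hT (by omega) (by omega)
    have htree : (H.deleteEdges {e}).IsTree := ⟨hT, hac⟩
    have := isTree_ncard htree
    omega



end B
lemma decomp {H : SimpleGraph V} {x y a b : V} (w : H.Walk x y) (he : s(a, b) ∈ w.edges) :
    (∃ (h : H.Adj a b) (w₁ : H.Walk x a) (w₂ : H.Walk b y),
        w = w₁.append (SimpleGraph.Walk.cons h w₂)) ∨
    (∃ (h : H.Adj b a) (w₁ : H.Walk x b) (w₂ : H.Walk a y),
        w = w₁.append (SimpleGraph.Walk.cons h w₂)) := by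
  induction w with
  | nil => simp at he
  | @cons x z y hadj rest ih =>
    rw [SimpleGraph.Walk.edges_cons, List.mem_cons] at he
    rcases he with he | he
    · rcases Sym2.eq_iff.mp he with ⟨rfl, rfl⟩ | ⟨rfl, rfl⟩
      · exact Or.inl ⟨hadj, SimpleGraph.Walk.nil, rest, by simp⟩
      · exact Or.inr ⟨hadj, SimpleGraph.Walk.nil, rest, by simp⟩
    · rcases ih he with ⟨h, w₁, w₂, rfl⟩ | ⟨h, w₁, w₂, rfl⟩
      · exact Or.inl ⟨h, SimpleGraph.Walk.cons hadj w₁, w₂, by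
          rw [SimpleGraph.Walk.cons_append]⟩
      · exact Or.inr ⟨h, SimpleGraph.Walk.cons hadj w₁, w₂, by
          rw [SimpleGraph.Walk.cons_append]⟩

lemma decomp_props {H : SimpleGraph V} {x y a b : V} {w : H.Walk x y} (hw : w.IsPath)
    {h : H.Adj a b} {w₁ : H.Walk x a} {w₂ : H.Walk b y}
    (heq : w = w₁.append (SimpleGraph.Walk.cons h w₂)) :
    w₁.IsPath ∧ w₂.IsPath ∧ s(a, b) ∉ w₁.edges ∧ s(a, b) ∉ w₂.edges ∧
      ∀ z, z ∈ w₁.support → z ∈ w₂.support → False := by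
  subst heq
  have h₁ : w₁.IsPath := hw.of_append_left
  have h₂ : w₂.IsPath := ((SimpleGraph.Walk.cons_isPath_iff _ _).mp hw.of_append_right).1
  have hnd : (w₁.edges ++ s(a, b) :: w₂.edges).Nodup := by
    have := hw.isTrail.edges_nodup
    rwa [SimpleGraph.Walk.edges_append, SimpleGraph.Walk.edges_cons] at this
  rw [List.nodup_append] at hnd
  have hsupp : (w₁.support ++ w₂.support).Nodup := by
    have := hw.support_nodup
    rwa [SimpleGraph.Walk.support_append, SimpleGraph.Walk.support_cons,
      List.tail_cons] at this
  rw [List.nodup_append] at hsupp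
  refine ⟨h₁, h₂, fun hmem => hnd.2.2 _ hmem _ List.mem_cons_self rfl, ?_, ?_⟩
  · have := hnd.2.1
    rw [List.nodup_cons] at this
    exact this.1
  · intro z hz₁ hz₂
    exact hsupp.2.2 z hz₁ z hz₂ rfl

lemma crossing {T : SimpleGraph V} {P Q : V → Prop} :
    ∀ {x y : V} (w : T.Walk x y), P x → ¬ P y →
    (∀ z ∈ w.support, P z ∨ Q z) → (∀ z, P z → Q z → False) →
    ∃ z z', s(z, z') ∈ w.edges ∧ P z ∧ Q z' := by
  intro x y w
  induction w with
  | nil => intro hx hy _ _; exact absurd hx hy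
  | @cons x z y hadj rest ih =>
    intro hx hy hall hPQ
    by_cases hz : P z
    · obtain ⟨z₁, z₂, hmem, h1, h2⟩ := ih hz hy
        (fun z hz => hall z (by simp [SimpleGraph.Walk.support_cons, hz])) hPQ
      exact ⟨z₁, z₂, by simp [SimpleGraph.Walk.edges_cons, hmem], h1, h2⟩
    · have hq : Q z := (hall z (by simp [SimpleGraph.Walk.support_cons])).resolve_left hz
      exact ⟨x, z, by simp [SimpleGraph.Walk.edges_cons], hx, hq⟩

lemma cross_dir {T : SimpleGraph V} (htree : T.IsTree) {u v a b : V}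
    (A : T.Walk u a) (B : T.Walk b v) (C : T.Walk u b) (D : T.Walk a v)
    (hB : B.IsPath)
    (hAB : ∀ z, z ∈ A.support → z ∈ B.support → False)
    (hCD : ∀ z, z ∈ C.support → z ∈ D.support → False) : False := by
  classical
  have hEq : (A.append D).bypass = (C.append B).bypass :=
    ((htree.existsUnique_path u v).unique (A.append D).bypass_isPath
      (C.append B).bypass_isPath)
  have hsub₁ : ∀ z ∈ (A.append D).bypass.support, z ∈ A.support ∨ z ∈ D.support :=
    fun z hz => (SimpleGraph.Walk.mem_support_append_iff _ _).mp
      ((A.append D).support_bypass_subset hz)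
  have hsub₂ : ∀ z ∈ (A.append D).bypass.support, z ∈ C.support ∨ z ∈ B.support :=
    fun z hz => (SimpleGraph.Walk.mem_support_append_iff _ _).mp
      ((C.append B).support_bypass_subset (hEq ▸ hz))
  obtain ⟨z, z', hmem, hz, hz'⟩ :=
    crossing (P := fun z => z ∈ A.support ∧ z ∈ C.support)
      (Q := fun z => z ∈ B.support ∧ z ∈ D.support) (A.append D).bypass
      ⟨A.start_mem_support, C.start_mem_support⟩
      (fun hP => hAB v hP.1 B.end_mem_support)
      (fun z hzs => by
        rcases hsub₁ z hzs with h1 | h1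
        · rcases hsub₂ z hzs with h2 | h2
          · exact Or.inl ⟨h1, h2⟩
          · exact (hAB z h1 h2).elim
        · rcases hsub₂ z hzs with h2 | h2
          · exact (hCD z h2 h1).elim
          · exact Or.inr ⟨h2, h1⟩)
      (fun z hP hQ => hAB z hP.1 hQ.1)
  have hzA : z ∈ A.support := hz.1
  have hz'D : z' ∈ D.support := hz'.2
  have hTadj : T.Adj z z' := (A.append D).bypass.adj_of_mem_edges hmem
  have hne : z ≠ z' := fun h => hAB z hz.1 (h ▸ hz'.1)
  have hS₁ : (SimpleGraph.Walk.cons hTadj SimpleGraph.Walk.nil).IsPath := by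
    simp [SimpleGraph.Walk.isPath_def, hTadj.ne]
  have hEq2 : ((A.dropUntil z hzA).append (D.takeUntil z' hz'D)).bypass =
      SimpleGraph.Walk.cons hTadj SimpleGraph.Walk.nil :=
    (htree.existsUnique_path z z').unique (SimpleGraph.Walk.bypass_isPath _) hS₁
  have hmem2 : s(z, z') ∈ ((A.dropUntil z hzA).append (D.takeUntil z' hz'D)).bypass.edges := by
    rw [hEq2]
    simp [SimpleGraph.Walk.edges_cons]
  have hmem3 := ((A.dropUntil z hzA).append (D.takeUntil z' hz'D)).edges_bypass_subset hmem2
  rw [SimpleGraph.Walk.edges_append, List.mem_append] at hmem3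
  rcases hmem3 with h | h
  · have := A.edges_dropUntil_subset hzA h
    exact hAB z' (A.snd_mem_support_of_mem_edges this) hz'.1
  · have := D.edges_takeUntil_subset hz'D h
    exact hCD z hz.2 (D.fst_mem_support_of_mem_edges this)



namespace K

variable {H : SimpleGraph V} {e : Sym2 V}

lemma walk_transfer_del {x y : V} (w : H.Walk x y) (hw : e ∉ w.edges) :
    ∀ f ∈ w.edges, f ∈ (H.deleteEdges {e}).edgeSet := by
  intro f hf
  rw [SimpleGraph.edgeSet_deleteEdges]
  exact ⟨w.edges_subset_edgeSet hf, fun h => hw (Set.mem_singleton_iff.mp h ▸ hf)⟩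

/-- Transfer a walk from `deleteEdges` back to `H`. -/
def back {x y : V} (w : (H.deleteEdges {e}).Walk x y) : H.Walk x y :=
  w.transfer H (fun f hf =>
    SimpleGraph.edgeSet_mono (SimpleGraph.deleteEdges_le _) (w.edges_subset_edgeSet hf))

lemma back_transfer {x y : V} (w : H.Walk x y) (hw : e ∉ w.edges) :
    back (w.transfer (H.deleteEdges {e}) (walk_transfer_del w hw)) = w := by
  rw [back, SimpleGraph.Walk.transfer_transfer]
  exact w.transfer_self

lemma avoid_unique (htree : (H.deleteEdges {e}).IsTree) {x y : V} {w₁ w₂ : H.Walk x y}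
    (h₁ : w₁.IsPath) (h₂ : w₂.IsPath) (he₁ : e ∉ w₁.edges) (he₂ : e ∉ w₂.edges) :
    w₁ = w₂ := by
  have h := (htree.existsUnique_path x y).unique
    (h₁.transfer (walk_transfer_del w₁ he₁)) (h₂.transfer (walk_transfer_del w₂ he₂))
  have := congrArg back h
  rwa [back_transfer _ he₁, back_transfer _ he₂] at this

end K

section Main

variable {H : SimpleGraph V}

lemma same_dir {x y a b : V} (htree : (H.deleteEdges {s(a, b)}).IsTree)
    {wa wb : H.Walk x y} (ha : wa.IsPath) (hb : wb.IsPath)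
    {h₁ h₂ : H.Adj a b} {A₁ A₂ : H.Walk x a} {B₁ B₂ : H.Walk b y}
    (e₁ : wa = A₁.append (SimpleGraph.Walk.cons h₁ B₁))
    (e₂ : wb = A₂.append (SimpleGraph.Walk.cons h₂ B₂)) : wa = wb := by
  obtain ⟨hA₁, hB₁, heA₁, heB₁, -⟩ := decomp_props ha e₁
  obtain ⟨hA₂, hB₂, heA₂, heB₂, -⟩ := decomp_props hb e₂
  have hA : A₁ = A₂ := K.avoid_unique htree hA₁ hA₂ heA₁ heA₂
  have hB : B₁ = B₂ := K.avoid_unique htree hB₁ hB₂ heB₁ heB₂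
  rw [e₁, e₂, hA, hB]

lemma no_opposite {x y a b : V} (htree : (H.deleteEdges {s(a, b)}).IsTree)
    {wa wb : H.Walk x y} (ha : wa.IsPath) (hb : wb.IsPath)
    {h₁ : H.Adj a b} {h₂ : H.Adj b a} {A₁ : H.Walk x a} {B₁ : H.Walk b y}
    {A₂ : H.Walk x b} {B₂ : H.Walk a y}
    (e₁ : wa = A₁.append (SimpleGraph.Walk.cons h₁ B₁))
    (e₂ : wb = A₂.append (SimpleGraph.Walk.cons h₂ B₂)) : False := by
  obtain ⟨hA₁, hB₁, heA₁, heB₁, hd₁⟩ := decomp_props ha e₁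
  obtain ⟨hA₂, hB₂, heA₂, heB₂, hd₂⟩ := decomp_props hb e₂
  rw [Sym2.eq_swap] at heA₂ heB₂
  refine cross_dir htree
    (A₁.transfer _ (K.walk_transfer_del A₁ heA₁))
    (B₁.transfer _ (K.walk_transfer_del B₁ heB₁))
    (A₂.transfer _ (K.walk_transfer_del A₂ heA₂))
    (B₂.transfer _ (K.walk_transfer_del B₂ heB₂))
    (hB₁.transfer _) ?_ ?_
  · intro z hz₁ hz₂
    rw [SimpleGraph.Walk.support_transfer] at hz₁ hz₂
    exact hd₁ z hz₁ hz₂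
  · intro z hz₁ hz₂
    rw [SimpleGraph.Walk.support_transfer] at hz₁ hz₂
    exact hd₂ z hz₁ hz₂

lemma key' [Fintype V] (hconn : H.Connected)
    (hE : H.edgeSet.ncard ≤ Fintype.card V) {u v : V}
    (w₁ w₂ w₃ : H.Walk u v) (h₁ : w₁.IsPath) (h₂ : w₂.IsPath) (h₃ : w₃.IsPath)
    (h12 : w₁ ≠ w₂) (h13 : w₁ ≠ w₃) (h23 : w₂ ≠ w₃) : False := by
  by_cases hac : H.IsAcyclic
  · exact h12 (congrArg Subtype.val (hac.path_unique ⟨w₁, h₁⟩ ⟨w₂, h₂⟩))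
  simp only [SimpleGraph.IsAcyclic] at hac
  push_neg at hac
  obtain ⟨v₀, c, hc⟩ := hac
  have h3 := hc.three_le_length
  have hne : c.edges ≠ [] := by
    intro h
    have := c.length_edges
    rw [h] at this
    simp at this
    omega
  obtain ⟨a, b, hab⟩ : ∃ a b, c.edges.head hne = s(a, b) :=
    Sym2.inductionOn (c.edges.head hne) (fun a b => ⟨a, b, rfl⟩)
  have he : s(a, b) ∈ c.edges := hab ▸ List.head_mem hne
  have heE : s(a, b) ∈ H.edgeSet := c.edges_subset_edgeSet he
  have hTconn := connected_deleteEdges_of_cycle hconn hc he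
  have hTcard : (H.deleteEdges {s(a, b)}).edgeSet.ncard + 1 = H.edgeSet.ncard := by
    rw [SimpleGraph.edgeSet_deleteEdges]
    exact ncard_sub_one heE
  have hTac : (H.deleteEdges {s(a, b)}).IsAcyclic :=
    acyclic_of_sparse _ _ hTconn rfl (by omega)
  have htree : (H.deleteEdges {s(a, b)}).IsTree := ⟨hTconn, hTac⟩
  have users : ∀ (wa wb : H.Walk u v), wa.IsPath → wb.IsPath →
      s(a, b) ∈ wa.edges → s(a, b) ∈ wb.edges → wa = wb := by
    intro wa wb hpa hpb hea heb
    rcases decomp wa hea with ⟨h, A₁, B₁, e₁⟩ | ⟨h, A₁, B₁, e₁⟩ <;>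
      rcases decomp wb heb with ⟨h', A₂, B₂, e₂⟩ | ⟨h', A₂, B₂, e₂⟩
    · exact same_dir htree hpa hpb e₁ e₂
    · exact (no_opposite htree hpa hpb e₁ e₂).elim
    · exact (no_opposite htree hpb hpa e₂ e₁).elim
    · exact same_dir (Sym2.eq_swap ▸ htree) hpa hpb e₁ e₂
  have avoid : ∀ (wa wb : H.Walk u v), wa.IsPath → wb.IsPath →
      s(a, b) ∉ wa.edges → s(a, b) ∉ wb.edges → wa = wb :=
    fun wa wb hpa hpb hea heb => K.avoid_unique htree hpa hpb hea heb
  by_cases m1 : s(a, b) ∈ w₁.edges <;> by_cases m2 : s(a, b) ∈ w₂.edges <;>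
    by_cases m3 : s(a, b) ∈ w₃.edges
  · exact h12 (users _ _ h₁ h₂ m1 m2)
  · exact h12 (users _ _ h₁ h₂ m1 m2)
  · exact h13 (users _ _ h₁ h₃ m1 m3)
  · exact h23 (avoid _ _ h₂ h₃ m2 m3)
  · exact h23 (users _ _ h₂ h₃ m2 m3)
  · exact h13 (avoid _ _ h₁ h₃ m1 m3)
  · exact h12 (avoid _ _ h₁ h₂ m1 m2)
  · exact h12 (avoid _ _ h₁ h₂ m1 m2)

end Main



end C

section Ball

variable {n : ℕ} {G : SimpleGraph (Fin n)} {i : Fin n} {ℓ : ℕ}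

lemma edist_le_of_chain (q : ℕ → Fin n) (k : ℕ) (hq0 : q 0 = i)
    (hadj : ∀ t < k, G.Adj (q t) (q (t + 1))) :
    ∀ t ≤ k, G.edist i (q t) ≤ (t : ℕ∞) := by
  intro t
  induction t with
  | zero => intro _; simp [hq0, SimpleGraph.edist_self]
  | succ t ih =>
    intro ht
    have h1 := ih (by omega)
    have h2 : G.edist (q t) (q (t + 1)) ≤ 1 :=
      le_of_eq (SimpleGraph.edist_eq_one_iff_adj.mpr (hadj t (by omega)))
    calc G.edist i (q (t + 1)) ≤ G.edist i (q t) + G.edist (q t) (q (t + 1)) :=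
          SimpleGraph.edist_triangle
      _ ≤ (t : ℕ∞) + 1 := add_le_add h1 h2
      _ = ((t + 1 : ℕ) : ℕ∞) := by push_cast; rfl

lemma i_mem_ball : i ∈ {j | G.edist i j ≤ (ℓ : ℕ∞)} := by
  simp [Set.mem_setOf_eq, SimpleGraph.edist_self]

lemma lift_walk {k : ℕ} (hk : k ≤ ℓ) (q : ℕ → Fin n) (hq0 : q 0 = i) {j : Fin n}
    (hqk : q k = j) (hadj : ∀ t < k, G.Adj (q t) (q (t + 1)))
    (hinj : ∀ s t, s ≤ k → t ≤ k → q s = q t → s = t)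
    (hj : j ∈ {j | G.edist i j ≤ (ℓ : ℕ∞)}) :
    ∃ w : (G.induce {j | G.edist i j ≤ (ℓ : ℕ∞)}).Walk ⟨i, i_mem_ball⟩ ⟨j, hj⟩,
      w.IsPath ∧ w.length = k ∧ ∀ t ≤ k, (w.getVert t).1 = q t := by
  have hdist := edist_le_of_chain q k hq0 hadj
  set s : Set (Fin n) := {j | G.edist i j ≤ (ℓ : ℕ∞)} with hs
  have hmem : ∀ t : ℕ, q (min t k) ∈ s := by
    intro t
    have h1 := hdist (min t k) (by omega)
    refine Set.mem_setOf_eq ▸ le_trans h1 ?_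
    exact_mod_cast Nat.cast_le.mpr (le_trans (Nat.min_le_right t k) hk)
  set ql : ℕ → ↥s := fun t => ⟨q (min t k), hmem t⟩ with hql
  have hadj' : ∀ t < k, (G.induce s).Adj (ql t) (ql (t + 1)) := by
    intro t ht
    show G.Adj (q (min t k)) (q (min (t + 1) k))
    rw [Nat.min_eq_left (by omega), Nat.min_eq_left (by omega)]
    exact hadj t ht
  have h0 : ql 0 = (⟨i, i_mem_ball⟩ : ↥s) := by
    apply Subtype.ext
    show q (min 0 k) = i
    rw [Nat.min_eq_left (by omega), hq0]
  have hkend : ql k = (⟨j, hj⟩ : ↥s) := by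
    apply Subtype.ext
    show q (min k k) = j
    rw [Nat.min_self, hqk]
  refine ⟨((walkOfFn _ k ql hadj').copy h0 hkend), ?_, ?_, ?_⟩
  · rw [SimpleGraph.Walk.isPath_copy]
    refine isPath_walkOfFn k ql hadj' ?_
    intro a b ha hb hab
    refine hinj a b ha hb ?_
    have : q (min a k) = q (min b k) := congrArg Subtype.val hab
    rwa [Nat.min_eq_left ha, Nat.min_eq_left hb] at this
  · rw [SimpleGraph.Walk.length_copy, length_walkOfFn]
  · intro t ht
    rw [SimpleGraph.Walk.getVert_copy, getVert_walkOfFn k ql hadj' t ht]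
    show q (min t k) = q t
    rw [Nat.min_eq_left ht]

lemma exists_path_of_edist {j : Fin n} {k : ℕ} (h : G.edist i j = (k : ℕ∞)) :
    ∃ w : G.Walk i j, w.IsPath ∧ w.length = k := by
  obtain ⟨w, hw⟩ := SimpleGraph.exists_walk_of_edist_eq_coe h
  refine ⟨w.bypass, w.bypass_isPath, le_antisymm ?_ ?_⟩
  · exact hw ▸ w.length_bypass_le
  · have := h ▸ SimpleGraph.edist_le w.bypass
    exact_mod_cast this

lemma ball_connected : (G.induce {j | G.edist i j ≤ (ℓ : ℕ∞)}).Connected := by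
  set s : Set (Fin n) := {j | G.edist i j ≤ (ℓ : ℕ∞)} with hs
  have hreach : ∀ z : ↥s, (G.induce s).Reachable ⟨i, i_mem_ball⟩ z := by
    rintro ⟨j, hj⟩
    have hne : G.edist i j ≠ ⊤ := by
      intro h
      rw [Set.mem_setOf_eq, h] at hj
      exact (lt_irrefl _ (lt_of_le_of_lt hj (by exact_mod_cast ENat.coe_lt_top ℓ))).elim
    set k := (G.edist i j).toNat with hk
    have hkeq : G.edist i j = (k : ℕ∞) := (ENat.coe_toNat hne).symm
    have hkl : k ≤ ℓ := by
      have h2 := hj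
      rw [Set.mem_setOf_eq, hkeq] at h2
      exact_mod_cast h2
    obtain ⟨w, hwp, hwl⟩ := exists_path_of_edist hkeq
    obtain ⟨w', hw'⟩ := lift_walk hkl (fun t => w.getVert t) (w.getVert_zero)
      (by rw [← hwl]; exact w.getVert_length)
      (fun t ht => w.adj_getVert_succ (by omega))
      (fun a b ha hb hab => getVert_injOn w hwp a b (by omega) (by omega) hab) hj
    exact ⟨w'⟩
  have : Nonempty ↥s := ⟨⟨i, i_mem_ball⟩⟩
  exact ⟨fun x y => (hreach x).symm.trans (hreach y)⟩

end Ball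

section Saw

variable {n : ℕ} {G : SimpleGraph (Fin n)} [DecidableRel G.Adj] {i : Fin n} {ℓ : ℕ}

def sawCond (G : SimpleGraph (Fin n)) (m : ℕ) (i : Fin n) (p : Fin (m + 1) → Fin n) : Prop :=
  p 0 = i ∧ Function.Injective p ∧ ∀ t : Fin m, G.Adj (p t.castSucc) (p t.succ)

instance sawCondDec {m : ℕ} {p : Fin (m + 1) → Fin n} : Decidable (sawCond G m i p) :=
  decidable_of_iff (p 0 = i ∧ Function.Injective p ∧
    ∀ t : Fin m, G.Adj (p t.castSucc) (p t.succ)) Iff.rfl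

def toNatFn {m : ℕ} (p : Fin (m + 1) → Fin n) : ℕ → Fin n :=
  fun t => p ⟨min t m, by omega⟩

lemma toNatFn_eq {m : ℕ} (p : Fin (m + 1) → Fin n) {t : ℕ} (ht : t ≤ m) (h' : t < m + 1) :
    toNatFn p t = p ⟨t, h'⟩ := by
  unfold toNatFn
  congr 1
  exact Fin.ext (by simp [Nat.min_eq_left ht])

lemma toNatFn_zero {m : ℕ} {p : Fin (m + 1) → Fin n} (h : p 0 = i) : toNatFn p 0 = i := by
  rw [toNatFn_eq p (by omega) (by omega), ← h]
  exact congrArg p (Fin.ext (by simp))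

lemma toNatFn_last {m : ℕ} (p : Fin (m + 1) → Fin n) : toNatFn p m = p (Fin.last m) := by
  rw [toNatFn_eq p (by omega) (by omega)]
  rfl

lemma toNatFn_adj {m : ℕ} {p : Fin (m + 1) → Fin n}
    (h : ∀ t : Fin m, G.Adj (p t.castSucc) (p t.succ)) :
    ∀ t < m, G.Adj (toNatFn p t) (toNatFn p (t + 1)) := by
  intro t ht
  rw [toNatFn_eq p (by omega) (by omega), toNatFn_eq p (by omega) (by omega)]
  have h1 := h ⟨t, ht⟩
  convert h1 using 2 <;> exact Fin.ext rfl

lemma toNatFn_inj {m : ℕ} {p : Fin (m + 1) → Fin n} (hp : Function.Injective p) :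
    ∀ a b, a ≤ m → b ≤ m → toNatFn p a = toNatFn p b → a = b := by
  intro a b ha hb hab
  rw [toNatFn_eq p ha (by omega), toNatFn_eq p hb (by omega)] at hab
  have := hp hab
  exact congrArg Fin.val this

lemma cond_edist_le {m : ℕ} {p : Fin (m + 1) → Fin n} (hc : sawCond G m i p) :
    G.edist i (p (Fin.last m)) ≤ (m : ℕ∞) := by
  have hw := SimpleGraph.edist_le (walkOfFn G m (toNatFn p) (toNatFn_adj hc.2.2))
  rw [length_walkOfFn, toNatFn_zero hc.1, toNatFn_last] at hw
  exact hw

lemma cond_mem_ball {m : ℕ} {p : Fin (m + 1) → Fin n} (hm : m ≤ ℓ) (hc : sawCond G m i p) :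
    p (Fin.last m) ∈ {j | G.edist i j ≤ (ℓ : ℕ∞)} := by
  refine Set.mem_setOf_eq ▸ le_trans (cond_edist_le hc) ?_
  exact_mod_cast Nat.cast_le.mpr hm

lemma cond_lift {m : ℕ} {p : Fin (m + 1) → Fin n} (hm : m ≤ ℓ) (hc : sawCond G m i p)
    (hj : p (Fin.last m) ∈ {j | G.edist i j ≤ (ℓ : ℕ∞)}) :
    ∃ w : (G.induce {j | G.edist i j ≤ (ℓ : ℕ∞)}).Walk ⟨i, i_mem_ball⟩ ⟨p (Fin.last m), hj⟩,
      w.IsPath ∧ w.length = m ∧ ∀ t ≤ m, (w.getVert t).1 = toNatFn p t :=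
  lift_walk hm (toNatFn p) (toNatFn_zero hc.1) (toNatFn_last p) (toNatFn_adj hc.2.2)
    (toNatFn_inj hc.2.1) hj

lemma lift_of_edist {j : Fin n} {k : ℕ} (hk : k ≤ ℓ) (hd : G.edist i j = (k : ℕ∞))
    (hj : j ∈ {j | G.edist i j ≤ (ℓ : ℕ∞)}) :
    ∃ w : (G.induce {j | G.edist i j ≤ (ℓ : ℕ∞)}).Walk ⟨i, i_mem_ball⟩ ⟨j, hj⟩,
      w.IsPath ∧ w.length = k := by
  obtain ⟨w, hwp, hwl⟩ := exists_path_of_edist hd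
  obtain ⟨w', h1, h2, _⟩ := lift_walk hk (fun t => w.getVert t) (w.getVert_zero)
    (by rw [← hwl]; exact w.getVert_length)
    (fun t ht => w.adj_getVert_succ (by omega))
    (fun a b ha hb hab => getVert_injOn w hwp a b (by omega) (by omega) hab) hj
  exact ⟨w', h1, h2⟩

lemma tree_wd (ht : (G.induce {j | G.edist i j ≤ (ℓ : ℕ∞)}).IsTree)
    {m : ℕ} (hm : m ≤ ℓ) {p : Fin (m + 1) → Fin n} (hc : sawCond G m i p) :
    G.edist i (p (Fin.last m)) = (m : ℕ∞) := by
  have hj := cond_mem_ball hm hc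
  have hne : G.edist i (p (Fin.last m)) ≠ ⊤ := by
    intro h
    have := cond_edist_le hc
    rw [h] at this
    simp at this
  set k := (G.edist i (p (Fin.last m))).toNat with hkdef
  have hkeq : G.edist i (p (Fin.last m)) = (k : ℕ∞) := (ENat.coe_toNat hne).symm
  have hkm : k ≤ m := by
    have := cond_edist_le hc
    rw [hkeq] at this
    exact_mod_cast this
  obtain ⟨w1, hw1p, hw1l⟩ := lift_of_edist (le_trans hkm hm) hkeq hj
  obtain ⟨w2, hw2p, hw2l, _⟩ := cond_lift hm hc hj
  have := (ht.existsUnique_path _ _).unique hw1p hw2p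
  have hlen := congrArg SimpleGraph.Walk.length this
  rw [hw1l, hw2l] at hlen
  rw [hkeq, hlen]

lemma tree_inj (ht : (G.induce {j | G.edist i j ≤ (ℓ : ℕ∞)}).IsTree)
    {m : ℕ} (hm : m ≤ ℓ) {p q : Fin (m + 1) → Fin n} (hcp : sawCond G m i p)
    (hcq : sawCond G m i q) (hlast : p (Fin.last m) = q (Fin.last m)) : p = q := by
  have hjp := cond_mem_ball hm hcp
  obtain ⟨w1, hw1p, hw1l, hw1g⟩ := cond_lift hm hcp hjp
  obtain ⟨w2, hw2p, hw2l, hw2g⟩ := cond_lift hm hcq (hlast ▸ hjp)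
  have hend : (⟨q (Fin.last m), hlast ▸ hjp⟩ : {j | G.edist i j ≤ (ℓ : ℕ∞)}) =
      (⟨p (Fin.last m), hjp⟩ : {j | G.edist i j ≤ (ℓ : ℕ∞)}) := Subtype.ext hlast.symm
  set w2' := w2.copy rfl hend with hw2'def
  have hw2'p : w2'.IsPath := by
    rw [hw2'def, SimpleGraph.Walk.isPath_copy]
    exact hw2p
  have huniq : w1 = w2' := (ht.existsUnique_path _ _).unique hw1p hw2'p
  funext t
  have h1 := hw1g t.1 (Nat.lt_succ_iff.mp t.2)
  have h2 := hw2g t.1 (Nat.lt_succ_iff.mp t.2)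
  rw [toNatFn_eq p (Nat.lt_succ_iff.mp t.2) t.2] at h1
  rw [toNatFn_eq q (Nat.lt_succ_iff.mp t.2) t.2] at h2
  have hval : (w1.getVert t.1).1 = (w2.getVert t.1).1 := by
    rw [huniq, hw2'def, SimpleGraph.Walk.getVert_copy]
  have hpq : p ⟨t.1, t.2⟩ = q ⟨t.1, t.2⟩ := by rw [← h1, ← h2, hval]
  convert hpq using 2 <;> exact (Fin.ext rfl)

end Saw

section Saw2

variable {n : ℕ} {G : SimpleGraph (Fin n)} [DecidableRel G.Adj] {i : Fin n} {ℓ : ℕ}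

lemma saw_surj {j : Fin n} {m : ℕ} (hd : G.edist i j = (m : ℕ∞)) :
    ∃ p : Fin (m + 1) → Fin n, sawCond G m i p ∧ p (Fin.last m) = j := by
  obtain ⟨w, hwp, hwl⟩ := exists_path_of_edist hd
  refine ⟨fun t => w.getVert t.1, ⟨w.getVert_zero, ?_, ?_⟩, ?_⟩
  · intro a b hab
    exact Fin.ext (getVert_injOn w hwp a.1 b.1 (by omega) (by omega) hab)
  · intro t
    exact w.adj_getVert_succ (by simp; omega)
  · show w.getVert m = j
    rw [← hwl]
    exact w.getVert_length

lemma tree_sum (ht : (G.induce {j | G.edist i j ≤ (ℓ : ℕ∞)}).IsTree)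
    {m : ℕ} (hm : m ≤ ℓ) (x : Fin n → ℝ) :
    ∑ p : Fin (m + 1) → Fin n, (if sawCond G m i p then x (p (Fin.last m)) else 0)
      = ∑ j, if G.edist i j = (m : ℕ∞) then x j else 0 := by
  classical
  rw [show (∑ p : Fin (m + 1) → Fin n, (if sawCond G m i p then x (p (Fin.last m)) else 0)) = ∑ p ∈ Finset.univ.filter (fun p => sawCond G m i p), x (p (Fin.last m)) from (Finset.sum_filter _ _).symm,
    show (∑ j, if G.edist i j = (m : ℕ∞) then x j else 0) = ∑ j ∈ Finset.univ.filter (fun j => G.edist i j = (m : ℕ∞)), x j from (Finset.sum_filter _ _).symm]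
  refine Finset.sum_bij (fun p _ => p (Fin.last m)) ?_ ?_ ?_ ?_
  · intro p hp
    rw [Finset.mem_filter] at hp ⊢
    exact ⟨Finset.mem_univ _, tree_wd ht hm hp.2⟩
  · intro p hp q hq hpq
    rw [Finset.mem_filter] at hp hq
    exact tree_inj ht hm hp.2 hq.2 hpq
  · intro j hj
    rw [Finset.mem_filter] at hj
    obtain ⟨p, hp, hlast⟩ := saw_surj hj.2
    exact ⟨p, Finset.mem_filter.mpr ⟨Finset.mem_univ _, hp⟩, hlast⟩
  · intro p hp
    rfl

lemma bmat_mulVec {m : ℕ} [DecidableRel G.Adj] (x : Fin n → ℝ) :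
    (Bmat n m (G.adjMatrix ℝ)).mulVec x i =
      ∑ p : Fin (m + 1) → Fin n, (if sawCond G m i p then x (p (Fin.last m)) else 0) := by
  classical
  unfold Bmat
  simp only [Matrix.mulVec, dotProduct, Matrix.of_apply]
  simp_rw [Finset.sum_mul]
  rw [Finset.sum_comm]
  refine Finset.sum_congr rfl fun p _ => ?_
  rw [Finset.sum_eq_single (p (Fin.last m))]
  · by_cases hp : sawCond G m i p
    · rw [if_pos ⟨hp.1, rfl, hp.2.1⟩, if_pos hp]
      have hprod : (∏ t : Fin m, (G.adjMatrix ℝ) (p t.castSucc) (p t.succ)) = 1 := by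
        rw [Finset.prod_eq_one]
        intro t _
        simp [SimpleGraph.adjMatrix_apply, hp.2.2 t]
      rw [hprod, one_mul]
    · rw [if_neg hp]
      by_cases h2 : p 0 = i ∧ p (Fin.last m) = p (Fin.last m) ∧ Function.Injective p
      · rw [if_pos h2]
        have hadj : ¬ ∀ t : Fin m, G.Adj (p t.castSucc) (p t.succ) :=
          fun hall => hp ⟨h2.1, h2.2.2, hall⟩
        push_neg at hadj
        obtain ⟨t, htt⟩ := hadj
        rw [Finset.prod_eq_zero (Finset.mem_univ t)]
        · rw [zero_mul]
        · simp [SimpleGraph.adjMatrix_apply, htt]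
      · rw [if_neg h2, zero_mul]
  · intro j _ hj
    rw [if_neg, zero_mul]
    rintro ⟨-, rfl, -⟩
    exact hj rfl
  · intro h
    exact absurd (Finset.mem_univ _) h

end Saw2

section Count

variable {n : ℕ} {G : SimpleGraph (Fin n)} [DecidableRel G.Adj] {i : Fin n} {ℓ : ℕ}

lemma cond_lift' {m : ℕ} {p : Fin (m + 1) → Fin n} (hm : m ≤ ℓ) (hc : sawCond G m i p)
    {j : Fin n} (hlast : p (Fin.last m) = j) (hj : j ∈ {j | G.edist i j ≤ (ℓ : ℕ∞)}) :
    ∃ w : (G.induce {j | G.edist i j ≤ (ℓ : ℕ∞)}).Walk ⟨i, i_mem_ball⟩ ⟨j, hj⟩,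
      w.IsPath ∧ w.length = m ∧ ∀ t ≤ m, (w.getVert t).1 = toNatFn p t := by
  obtain ⟨w, h1, h2, h3⟩ := cond_lift hm hc (hlast ▸ hj)
  have hend : (⟨p (Fin.last m), hlast ▸ hj⟩ : {j | G.edist i j ≤ (ℓ : ℕ∞)}) =
      (⟨j, hj⟩ : {j | G.edist i j ≤ (ℓ : ℕ∞)}) := Subtype.ext hlast
  refine ⟨w.copy rfl hend, ?_, ?_, ?_⟩
  · rwa [SimpleGraph.Walk.isPath_copy]
  · rwa [SimpleGraph.Walk.length_copy]
  · intro t ht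
    rw [SimpleGraph.Walk.getVert_copy]
    exact h3 t ht

lemma fn_eq_of_lift_eq {m : ℕ} {p q : Fin (m + 1) → Fin n} {a b : {j | G.edist i j ≤ (ℓ : ℕ∞)}}
    {w₁ w₂ : (G.induce {j | G.edist i j ≤ (ℓ : ℕ∞)}).Walk a b}
    (h₁ : ∀ t ≤ m, (w₁.getVert t).1 = toNatFn p t)
    (h₂ : ∀ t ≤ m, (w₂.getVert t).1 = toNatFn q t) (hw : w₁ = w₂) : p = q := by
  funext t
  have e1 := h₁ t.1 (Nat.lt_succ_iff.mp t.2)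
  have e2 := h₂ t.1 (Nat.lt_succ_iff.mp t.2)
  rw [toNatFn_eq p (Nat.lt_succ_iff.mp t.2) t.2] at e1
  rw [toNatFn_eq q (Nat.lt_succ_iff.mp t.2) t.2] at e2
  rw [hw] at e1
  have hpq : p ⟨t.1, t.2⟩ = q ⟨t.1, t.2⟩ := by rw [← e1, ← e2]
  convert hpq using 2 <;> exact (Fin.ext rfl)

lemma fiber_le_two
    (hsp : (G.induce {j | G.edist i j ≤ (ℓ : ℕ∞)}).edgeSet.ncard ≤
      Set.ncard {j | G.edist i j ≤ (ℓ : ℕ∞)}) {m : ℕ} (hm : m ≤ ℓ) (j : Fin n) :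
    (Finset.univ.filter (fun p : Fin (m + 1) → Fin n =>
        sawCond G m i p ∧ p (Fin.last m) = j)).card ≤ 2 := by
  classical
  by_contra hlt
  push_neg at hlt
  rw [Finset.two_lt_card] at hlt
  obtain ⟨p₁, hp₁, p₂, hp₂, p₃, hp₃, h12, h13, h23⟩ := hlt
  rw [Finset.mem_filter] at hp₁ hp₂ hp₃
  have hj : j ∈ {j | G.edist i j ≤ (ℓ : ℕ∞)} := hp₁.2.2 ▸ cond_mem_ball hm hp₁.2.1
  obtain ⟨w₁, hw₁p, hw₁l, hw₁g⟩ := cond_lift' hm hp₁.2.1 hp₁.2.2 hj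
  obtain ⟨w₂, hw₂p, hw₂l, hw₂g⟩ := cond_lift' hm hp₂.2.1 hp₂.2.2 hj
  obtain ⟨w₃, hw₃p, hw₃l, hw₃g⟩ := cond_lift' hm hp₃.2.1 hp₃.2.2 hj
  letI : Fintype ({j | G.edist i j ≤ (ℓ : ℕ∞)} : Set (Fin n)) := Fintype.ofFinite _
  have hE : (G.induce {j | G.edist i j ≤ (ℓ : ℕ∞)}).edgeSet.ncard ≤
      Fintype.card ({j | G.edist i j ≤ (ℓ : ℕ∞)} : Set (Fin n)) := by
    refine le_trans hsp ?_
    rw [← Nat.card_coe_set_eq, Nat.card_eq_fintype_card]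
  exact key' ball_connected hE w₁ w₂ w₃ hw₁p hw₂p hw₃p
    (fun h => h12 (fn_eq_of_lift_eq hw₁g hw₂g h))
    (fun h => h13 (fn_eq_of_lift_eq hw₁g hw₃g h))
    (fun h => h23 (fn_eq_of_lift_eq hw₂g hw₃g h))

lemma count_le
    (hsp : (G.induce {j | G.edist i j ≤ (ℓ : ℕ∞)}).edgeSet.ncard ≤
      Set.ncard {j | G.edist i j ≤ (ℓ : ℕ∞)}) {m : ℕ} (hm : m ≤ ℓ) :
    (Finset.univ.filter (fun p : Fin (m + 1) → Fin n => sawCond G m i p)).card ≤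
      2 * (Finset.univ.filter (fun j => G.edist i j ≤ (m : ℕ∞))).card := by
  classical
  rw [Finset.card_eq_sum_card_fiberwise (f := fun p : Fin (m + 1) → Fin n => p (Fin.last m))
    (t := Finset.univ.filter (fun j => G.edist i j ≤ (m : ℕ∞)))
    (fun p hp => by
      rw [Finset.mem_coe, Finset.mem_filter] at hp ⊢
      exact ⟨Finset.mem_univ _, cond_edist_le hp.2⟩)]
  calc ∑ j ∈ Finset.univ.filter (fun j => G.edist i j ≤ (m : ℕ∞)),
        ((Finset.univ.filter (fun p : Fin (m + 1) → Fin n => sawCond G m i p)).filter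
          (fun p => p (Fin.last m) = j)).card
      ≤ ∑ _j ∈ Finset.univ.filter (fun j => G.edist i j ≤ (m : ℕ∞)), 2 := by
        refine Finset.sum_le_sum fun j _ => ?_
        rw [Finset.filter_filter]
        exact fiber_le_two hsp hm j
    _ = 2 * (Finset.univ.filter (fun j => G.edist i j ≤ (m : ℕ∞))).card := by
        rw [Finset.sum_const, smul_eq_mul, mul_comm]

lemma sg_sum {m : ℕ} : ∑ t ∈ Finset.range (m + 1), Sg G i t =
    ((Finset.univ.filter (fun j => G.edist i j ≤ (m : ℕ∞))).card : ℝ) := by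
  classical
  unfold Sg
  rw [Finset.sum_comm]
  have hinner : ∀ j : Fin n, ∑ t ∈ Finset.range (m + 1),
      (if G.edist i j = ((t : ℕ) : ℕ∞) then (1 : ℝ) else 0) =
      if G.edist i j ≤ (m : ℕ∞) then (1 : ℝ) else 0 := by
    intro j
    by_cases h : G.edist i j ≤ (m : ℕ∞)
    · have hne : G.edist i j ≠ ⊤ := fun ht => by
        rw [ht] at h
        exact (lt_irrefl _ (lt_of_le_of_lt h (by exact_mod_cast ENat.coe_lt_top m))).elim
      set k := (G.edist i j).toNat with hkdef
      have hkeq : G.edist i j = (k : ℕ∞) := (ENat.coe_toNat hne).symm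
      have hkm : k ≤ m := by
        rw [hkeq] at h
        exact_mod_cast h
      rw [if_pos h, Finset.sum_eq_single k]
      · rw [if_pos hkeq]
      · intro t _ htk
        rw [if_neg]
        intro he
        rw [hkeq] at he
        exact htk (by exact_mod_cast he.symm)
      · intro hk
        exact absurd (Finset.mem_range.mpr (by omega)) hk
    · rw [if_neg h]
      refine Finset.sum_eq_zero fun t htr => ?_
      rw [Finset.mem_range] at htr
      rw [if_neg]
      intro he
      exact h (he ▸ (by exact_mod_cast Nat.cast_le.mpr (by omega : t ≤ m)))
  rw [Finset.sum_congr rfl fun j _ => hinner j, Finset.sum_boole]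

end Count

end SBMAux

theorem neighborhood_path_counts
    (n ℓ : ℕ) (G : SimpleGraph (Fin n)) [DecidableRel G.Adj]
    (σ : Fin n → ℤ) (hσ : ∀ i, σ i = 1 ∨ σ i = -1) (i : Fin n) :
    ((G.induce {j | G.edist i j ≤ (ℓ : ℕ∞)}).IsTree →
      ∀ m : ℕ, m ≤ ℓ →
        (Bmat n m (G.adjMatrix ℝ)).mulVec (fun _ => 1) i = Sg G i m ∧
        (Bmat n m (G.adjMatrix ℝ)).mulVec (fun j => (σ j : ℝ)) i = Dg G σ i m) ∧
    ((G.induce {j | G.edist i j ≤ (ℓ : ℕ∞)}).edgeSet.ncard ≤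
        Set.ncard {j | G.edist i j ≤ (ℓ : ℕ∞)} →
      ∀ m : ℕ, m ≤ ℓ →
        |(Bmat n m (G.adjMatrix ℝ)).mulVec (fun j => (σ j : ℝ)) i| ≤
            (Bmat n m (G.adjMatrix ℝ)).mulVec (fun _ => 1) i ∧
          (Bmat n m (G.adjMatrix ℝ)).mulVec (fun _ => 1) i ≤
            2 * ∑ t ∈ Finset.range (m + 1), Sg G i t) := by
  classical
  constructor
  · intro ht m hm
    constructor
    · rw [SBMAux.bmat_mulVec]
      exact SBMAux.tree_sum ht hm (fun _ => (1 : ℝ))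
    · rw [SBMAux.bmat_mulVec]
      exact SBMAux.tree_sum ht hm (fun j => (σ j : ℝ))
  · intro hsp m hm
    have hBe : (Bmat n m (G.adjMatrix ℝ)).mulVec (fun _ => 1) i =
        ((Finset.univ.filter
          (fun p : Fin (m + 1) → Fin n => SBMAux.sawCond G m i p)).card : ℝ) := by
      rw [SBMAux.bmat_mulVec, Finset.sum_boole]
    constructor
    · rw [SBMAux.bmat_mulVec, SBMAux.bmat_mulVec]
      refine le_trans (Finset.abs_sum_le_sum_abs _ _) (Finset.sum_le_sum fun p _ => ?_)
      by_cases hc : SBMAux.sawCond G m i p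
      · rw [if_pos hc, if_pos hc]
        rcases hσ (p (Fin.last m)) with h | h <;> simp [h]
      · simp [hc]
    · rw [hBe, SBMAux.sg_sum]
      have h2 := SBMAux.count_le hsp hm
      calc ((Finset.univ.filter
            (fun p : Fin (m + 1) → Fin n => SBMAux.sawCond G m i p)).card : ℝ)
          ≤ ((2 * (Finset.univ.filter (fun j => G.edist i j ≤ (m : ℕ∞))).card : ℕ) : ℝ) :=
            Nat.cast_le.mpr h2
        _ = 2 * ((Finset.univ.filter (fun j => G.edist i j ≤ (m : ℕ∞))).card : ℝ) := by
            push_cast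
            ring

end
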